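/- Let A : ℝ → ℝ be continuous, bounded, with A(x₀) ≤ -δ < 0 for all x₀ and A(x₀) → A(±∞) as x₀ → ±∞. Then there exists a solution ρ*(x₀) of dρ/dx₀ = A(x₀)/ρ + 1 defined for all x₀ ∈ ℝ which is bounded: there exist 0 < c ≤ C with c ≤ ρ*(x₀) ≤ C for all x₀. -/

import Mathlib

open Filter MeasureTheory Set

namespace Stmt18Aux

/-- The basic exponential integral on a half line. -/
lemma integral_exp_neg_mul_Ioi {b : ℝ} (hb : 0 < b) (a : ℝ) :
    ∫ s in Ioi a, Real.exp (-b * s) = Real.exp (-b * a) / b := by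
  have hderiv : ∀ x ∈ Ici a,
      HasDerivAt (fun s => -Real.exp (-b * s) / b) (Real.exp (-b * x)) x := by
    intro x _
    have h1 : HasDerivAt (fun s : ℝ => -b * s) (-b) x := by
      simpa using (hasDerivAt_id x).const_mul (-b)
    have h2 := h1.exp
    have h3 := (h2.neg).div_const b
    rw [show -(Real.exp (-b * x) * -b) / b = Real.exp (-b * x) by field_simp] at h3
    exact h3
  have hint : IntegrableOn (fun s => Real.exp (-b * s)) (Ioi a) :=
    exp_neg_integrableOn_Ioi a hb
  have htend : Tendsto (fun s => -Real.exp (-b * s) / b) atTop (nhds 0) := by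
    have : Tendsto (fun s : ℝ => -b * s) atTop atBot :=
      (tendsto_const_mul_atBot_of_neg (by linarith)).2 tendsto_id
    have := (Real.tendsto_exp_atBot.comp this)
    have h := ((this.neg).div_const b)
    simpa using h
  have := integral_Ioi_of_hasDerivAt_of_tendsto' hderiv hint htend
  rw [this]
  field_simp
  ring

variable {μ : ℝ}

/-- The key integral operator. -/
noncomputable def J (μ : ℝ) (g : ℝ → ℝ) (x : ℝ) : ℝ :=
  ∫ s in Ioi x, Real.exp (μ * (x - s)) * g s

lemma exp_factor (x s : ℝ) :
    Real.exp (μ * (x - s)) = Real.exp (μ * x) * Real.exp (-μ * s) := by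
  rw [← Real.exp_add]; ring_nf

lemma integrableOn_exp_mul_g (hμ : 0 < μ) {g : ℝ → ℝ} (hg : Continuous g)
    {K : ℝ} (hK : ∀ s, |g s| ≤ K) (a : ℝ) :
    IntegrableOn (fun s => Real.exp (-μ * s) * g s) (Ioi a) := by
  have hexp : IntegrableOn (fun s => Real.exp (-μ * s)) (Ioi a) :=
    exp_neg_integrableOn_Ioi a hμ
  have h1 : IntegrableOn (fun s => g s * Real.exp (-μ * s)) (Ioi a) :=
    hexp.bdd_mul (hg.aestronglyMeasurable.restrict) (ae_of_all _ fun s => by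
      simpa [Real.norm_eq_abs] using hK s)
  exact h1.congr_fun (fun s _ => by ring) measurableSet_Ioi

lemma integrableOn_kernel_const (hμ : 0 < μ) (x r : ℝ) :
    IntegrableOn (fun s => Real.exp (μ * (x - s)) * r) (Ioi x) := by
  have h1 : IntegrableOn (fun s => (Real.exp (μ * x) * r) * Real.exp (-μ * s)) (Ioi x) :=
    (exp_neg_integrableOn_Ioi x hμ).const_mul _
  exact h1.congr_fun (fun s _ => by rw [exp_factor]; ring) measurableSet_Ioi

lemma integrableOn_integrand (hμ : 0 < μ) {g : ℝ → ℝ} (hg : Continuous g)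
    {K : ℝ} (hK : ∀ s, |g s| ≤ K) (x a : ℝ) :
    IntegrableOn (fun s => Real.exp (μ * (x - s)) * g s) (Ioi a) := by
  have h1 : IntegrableOn (fun s => Real.exp (μ * x) * (Real.exp (-μ * s) * g s)) (Ioi a) :=
    (integrableOn_exp_mul_g hμ hg hK a).const_mul _
  exact h1.congr_fun (fun s _ => by rw [exp_factor]; ring) measurableSet_Ioi

lemma J_eq (g : ℝ → ℝ) (y : ℝ) :
    J μ g y = Real.exp (μ * y) * ∫ s in Ioi y, Real.exp (-μ * s) * g s := by
  rw [J, ← integral_const_mul]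
  congr 1; ext s; rw [← mul_assoc, ← exp_factor]

lemma integral_exp_kernel (hμ : 0 < μ) (x : ℝ) :
    ∫ s in Ioi x, Real.exp (μ * (x - s)) = 1 / μ := by
  have h : (fun s => Real.exp (μ * (x - s))) =
      fun s => Real.exp (μ * x) * Real.exp (-μ * s) := by
    ext s; exact exp_factor x s
  have h0 : μ * x + -μ * x = 0 := by ring
  rw [h, integral_const_mul, integral_exp_neg_mul_Ioi hμ x, ← mul_div_assoc,
    ← Real.exp_add, h0, Real.exp_zero]

lemma J_lower (hμ : 0 < μ) {g : ℝ → ℝ} (hg : Continuous g) {K : ℝ}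
    (hK : ∀ s, |g s| ≤ K) {a : ℝ} (ha : ∀ s, a ≤ g s) (x : ℝ) :
    a / μ ≤ J μ g x := by
  have h1 := integrableOn_kernel_const hμ x a
  have h2 := integrableOn_integrand hμ hg hK x x
  have hmono := setIntegral_mono_on h1 h2 measurableSet_Ioi
    (fun s _ => mul_le_mul_of_nonneg_left (ha s) (Real.exp_pos (μ * (x - s))).le)
  calc a / μ = (∫ s in Ioi x, Real.exp (μ * (x - s))) * a := by
        rw [integral_exp_kernel hμ x]; ring
    _ = ∫ s in Ioi x, Real.exp (μ * (x - s)) * a := by rw [integral_mul_const]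
    _ ≤ J μ g x := hmono

lemma J_upper (hμ : 0 < μ) {g : ℝ → ℝ} (hg : Continuous g) {K : ℝ}
    (hK : ∀ s, |g s| ≤ K) {b : ℝ} (hb : ∀ s, g s ≤ b) (x : ℝ) :
    J μ g x ≤ b / μ := by
  have h1 := integrableOn_kernel_const hμ x b
  have h2 := integrableOn_integrand hμ hg hK x x
  have hmono := setIntegral_mono_on h2 h1 measurableSet_Ioi
    (fun s _ => mul_le_mul_of_nonneg_left (hb s) (Real.exp_pos (μ * (x - s))).le)
  calc J μ g x ≤ ∫ s in Ioi x, Real.exp (μ * (x - s)) * b := hmono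
    _ = (∫ s in Ioi x, Real.exp (μ * (x - s))) * b := by rw [integral_mul_const]
    _ = b / μ := by rw [integral_exp_kernel hμ x]; ring

lemma J_contract (hμ : 0 < μ) {g₁ g₂ : ℝ → ℝ} (hg₁ : Continuous g₁)
    (hg₂ : Continuous g₂) {K₁ K₂ : ℝ} (hK₁ : ∀ s, |g₁ s| ≤ K₁) (hK₂ : ∀ s, |g₂ s| ≤ K₂)
    {D : ℝ} (hD : ∀ s, |g₁ s - g₂ s| ≤ D) (x : ℝ) :
    |J μ g₁ x - J μ g₂ x| ≤ D / μ := by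
  have h1 := integrableOn_integrand hμ hg₁ hK₁ x x
  have h2 := integrableOn_integrand hμ hg₂ hK₂ x x
  have hsub : J μ g₁ x - J μ g₂ x
      = ∫ s in Ioi x, Real.exp (μ * (x - s)) * (g₁ s - g₂ s) := by
    rw [J, J, ← integral_sub h1 h2]
    congr 1; ext s; ring
  rw [hsub]
  have hsub2 : IntegrableOn
      (fun s => Real.exp (μ * (x - s)) * g₁ s - Real.exp (μ * (x - s)) * g₂ s) (Ioi x) :=
    h1.sub h2
  have hInt : IntegrableOn (fun s => Real.exp (μ * (x - s)) * (g₁ s - g₂ s)) (Ioi x) :=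
    hsub2.congr_fun (fun s _ => by ring) measurableSet_Ioi
  have hIntAbs : IntegrableOn
      (fun s => Real.exp (μ * (x - s)) * |g₁ s - g₂ s|) (Ioi x) := by
    have habs : IntegrableOn
        (fun s => |Real.exp (μ * (x - s)) * (g₁ s - g₂ s)|) (Ioi x) := hInt.abs
    exact habs.congr_fun
      (fun s _ => by dsimp only; rw [abs_mul, abs_of_pos (Real.exp_pos _)]) measurableSet_Ioi
  have hDb := integrableOn_kernel_const hμ x D
  calc |∫ s in Ioi x, Real.exp (μ * (x - s)) * (g₁ s - g₂ s)|
      ≤ ∫ s in Ioi x, Real.exp (μ * (x - s)) * |g₁ s - g₂ s| := by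
        simpa [Real.norm_eq_abs, abs_mul, abs_of_pos (Real.exp_pos _)] using
          norm_integral_le_integral_norm (μ := volume.restrict (Ioi x))
            (fun s => Real.exp (μ * (x - s)) * (g₁ s - g₂ s))
    _ ≤ ∫ s in Ioi x, Real.exp (μ * (x - s)) * D := by
        refine setIntegral_mono_on hIntAbs hDb measurableSet_Ioi (fun s _ => ?_)
        exact mul_le_mul_of_nonneg_left (hD s) (Real.exp_pos _).le
    _ = (∫ s in Ioi x, Real.exp (μ * (x - s))) * D := by rw [integral_mul_const]
    _ = D / μ := by rw [integral_exp_kernel hμ x]; ring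

lemma hasDerivAt_J (hμ : 0 < μ) {g : ℝ → ℝ} (hg : Continuous g) {K : ℝ}
    (hK : ∀ s, |g s| ≤ K) (x : ℝ) :
    HasDerivAt (J μ g) (μ * J μ g x - g x) x := by
  set h : ℝ → ℝ := fun s => Real.exp (-μ * s) * g s with hh
  have hhc : Continuous h := ((Real.continuous_exp.comp (continuous_const.mul continuous_id)).mul hg)
  have hint : ∀ a : ℝ, IntegrableOn h (Ioi a) := integrableOn_exp_mul_g hμ hg hK
  set W : ℝ → ℝ := fun y => ∫ s in Ioi y, h s with hW
  -- splitting identity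
  have hsplit : ∀ y, x - 1 ≤ y → W y = W (x - 1) - ∫ s in (x-1)..y, h s := by
    intro y hy
    have hWsum : W (x - 1) = (∫ s in Ioc (x-1) y, h s) + W y := by
      rw [hW]
      have : Ioi (x - 1) = Ioc (x-1) y ∪ Ioi y := (Ioc_union_Ioi_eq_Ioi hy).symm
      simp only
      rw [this, setIntegral_union (Ioc_disjoint_Ioi_same) measurableSet_Ioi
        ((hint (x-1)).mono_set Ioc_subset_Ioi_self) (hint y)]
    rw [intervalIntegral.integral_of_le hy]
    linarith [hWsum]
  have hWd : HasDerivAt W (-(h x)) x := by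
    have hev : W =ᶠ[nhds x] fun y => W (x - 1) - ∫ s in (x-1)..y, h s := by
      filter_upwards [Ioi_mem_nhds (show x - 1 < x by linarith)] with y hy
      exact hsplit y (le_of_lt hy)
    have hd : HasDerivAt (fun y => W (x - 1) - ∫ s in (x-1)..y, h s) (0 - h x) x := by
      exact (hasDerivAt_const x (W (x-1))).sub
        (intervalIntegral.integral_hasDerivAt_right
          (hhc.intervalIntegrable _ _)
          (hhc.stronglyMeasurableAtFilter _ _)
          hhc.continuousAt)
    have := hd.congr_of_eventuallyEq hev
    simpa using this
  -- J μ g = fun y => exp (μ y) * W y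
  have hJW : J μ g = fun y => Real.exp (μ * y) * W y := by
    funext y; exact J_eq g y
  have hexp : HasDerivAt (fun y => Real.exp (μ * y)) (μ * Real.exp (μ * x)) x := by
    have h1 : HasDerivAt (fun y : ℝ => μ * y) μ x := by
      simpa using (hasDerivAt_id x).const_mul μ
    simpa [mul_comm] using h1.exp
  have hprod := hexp.mul hWd
  have hWx : W x = ∫ s in Ioi x, Real.exp (-μ * s) * g s := rfl
  have hgx : Real.exp (μ * x) * h x = g x := by
    have h0 : μ * x + -μ * x = 0 := by ring
    show Real.exp (μ * x) * (Real.exp (-μ * x) * g x) = g x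
    rw [← mul_assoc, ← Real.exp_add, h0, Real.exp_zero, one_mul]
  have hval : μ * Real.exp (μ * x) * W x + Real.exp (μ * x) * -(h x)
      = μ * J μ g x - g x := by
    rw [J_eq g x, ← hWx, ← hgx]; ring
  have hfinal := hprod.congr_of_eventuallyEq (Filter.Eventually.of_forall fun y => J_eq g y)
  rw [← hval]
  exact hfinal

end Stmt18Aux

/-- for continuous bounded `A ≤ -δ < 0` with limits at `±∞`, there is a globally
defined, bounded (above and below by positive constants) solution `ρ*` of
`dρ/dx₀ = A(x₀)/ρ + 1` — the event horizon curve. -/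
theorem stmt18 (A : ℝ → ℝ) (δ : ℝ) (hδ : 0 < δ)
    (hAcont : Continuous A) (hAbd : ∃ M : ℝ, ∀ x₀, |A x₀| ≤ M)
    (hAneg : ∀ x₀, A x₀ ≤ -δ)
    (Ap Am : ℝ)
    (hAp : Tendsto A atTop (nhds Ap)) (hAm : Tendsto A atBot (nhds Am)) :
    ∃ ρstar : ℝ → ℝ, ∃ c C : ℝ, 0 < c ∧ c ≤ C ∧
      (∀ x₀, c ≤ ρstar x₀ ∧ ρstar x₀ ≤ C) ∧
      (∀ x₀, HasDerivAt ρstar (A x₀ / ρstar x₀ + 1) x₀) := by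
  classical
  obtain ⟨M₀, hM₀⟩ := hAbd
  set M : ℝ := max M₀ δ with hMdef
  have hMδ : δ ≤ M := le_max_right _ _
  have hM0 : 0 < M := lt_of_lt_of_le hδ hMδ
  have hA : ∀ x, |A x| ≤ M := fun x => le_trans (hM₀ x) (le_max_left _ _)
  have hAlow : ∀ x, -M ≤ A x := fun x => (abs_le.1 (hA x)).1
  set μ : ℝ := M / δ ^ 2 with hμdef
  have hμ : 0 < μ := by positivity
  have hμδ : 1 / δ ≤ μ := by
    rw [hμdef, div_le_div_iff₀ hδ (by positivity)]
    nlinarith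
  -- the space
  set S : Set (BoundedContinuousFunction ℝ ℝ) := {f | ∀ x, δ ≤ f x ∧ f x ≤ M} with hSdef
  have hSclosed : IsClosed S := by
    have hrw : S = ⋂ x : ℝ, (fun f : BoundedContinuousFunction ℝ ℝ => f x) ⁻¹' (Set.Icc δ M) := by
      ext f
      simp [hSdef, Set.mem_Icc, Set.mem_iInter]
    rw [hrw]
    exact isClosed_iInter fun x =>
      isClosed_Icc.preimage (continuous_eval_const x)
  haveI : CompleteSpace S := hSclosed.completeSpace_coe
  haveI : Nonempty S := ⟨⟨BoundedContinuousFunction.const ℝ δ, fun x => ⟨le_refl _, hMδ⟩⟩⟩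
  -- the nonlinearity
  set G : ↥S → ℝ → ℝ := fun f s => μ * f.1 s - A s / f.1 s - 1 with hGdef
  have hfpos : ∀ (f : ↥S) (s : ℝ), 0 < f.1 s := fun f s => lt_of_lt_of_le hδ (f.2 s).1
  have hGcont : ∀ f : ↥S, Continuous (G f) := by
    intro f
    exact ((continuous_const.mul f.1.continuous).sub
      (hAcont.div f.1.continuous fun s => (hfpos f s).ne')).sub continuous_const
  have hGbounds : ∀ (f : ↥S) (s : ℝ), μ * δ ≤ G f s ∧ G f s ≤ μ * M := by
    intro f s
    obtain ⟨h1, h2⟩ := f.2 s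
    have hρ : 0 < f.1 s := hfpos f s
    have hinvμ : 1 / f.1 s ≤ μ := le_trans (one_div_le_one_div_of_le hδ h1) hμδ
    constructor
    · have hq : A s / f.1 s ≤ -δ / f.1 s := (div_le_div_iff_of_pos_right hρ).2 (hAneg s)
      have key : μ * f.1 s + δ / f.1 s - 1 - μ * δ = (f.1 s - δ) * (μ - 1 / f.1 s) := by
        field_simp
        ring
      have hkey : 0 ≤ (f.1 s - δ) * (μ - 1 / f.1 s) :=
        mul_nonneg (by linarith) (by linarith)
      have hμρ : μ * δ ≤ μ * f.1 s + δ / f.1 s - 1 := by linarith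
      have : -δ / f.1 s = -(δ / f.1 s) := by ring
      rw [hGdef]
      simp only
      linarith [hq, this ▸ hq]
    · have hq : -M / f.1 s ≤ A s / f.1 s := (div_le_div_iff_of_pos_right hρ).2 (hAlow s)
      have key : μ * M - (μ * f.1 s + M / f.1 s - 1) = (M - f.1 s) * (μ - 1 / f.1 s) := by
        field_simp
        ring
      have hkey : 0 ≤ (M - f.1 s) * (μ - 1 / f.1 s) :=
        mul_nonneg (by linarith) (by linarith)
      have : -M / f.1 s = -(M / f.1 s) := by ring
      rw [hGdef]
      simp only
      linarith [this ▸ hq]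
  have hGabs : ∀ (f : ↥S) (s : ℝ), |G f s| ≤ μ * M := by
    intro f s
    obtain ⟨hl, hu⟩ := hGbounds f s
    have : 0 < μ * δ := mul_pos hμ hδ
    have : 0 < μ * M := mul_pos hμ hM0
    exact abs_le.2 ⟨by linarith, hu⟩
  -- the operator
  set Tfun : ↥S → ℝ → ℝ := fun f => Stmt18Aux.J μ (G f) with hTfundef
  have hTlow : ∀ (f : ↥S) (x : ℝ), δ ≤ Tfun f x := by
    intro f x
    have := Stmt18Aux.J_lower hμ (hGcont f) (hGabs f) (fun s => (hGbounds f s).1) x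
    rwa [mul_comm, mul_div_assoc, div_self hμ.ne', mul_one] at this
  have hTup : ∀ (f : ↥S) (x : ℝ), Tfun f x ≤ M := by
    intro f x
    have := Stmt18Aux.J_upper hμ (hGcont f) (hGabs f) (fun s => (hGbounds f s).2) x
    rwa [mul_comm, mul_div_assoc, div_self hμ.ne', mul_one] at this
  have hTderiv : ∀ (f : ↥S) (x : ℝ), HasDerivAt (Tfun f) (μ * Tfun f x - G f x) x :=
    fun f x => Stmt18Aux.hasDerivAt_J hμ (hGcont f) (hGabs f) x
  have hTcont : ∀ f : ↥S, Continuous (Tfun f) := fun f =>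
    continuous_iff_continuousAt.2 fun x => (hTderiv f x).continuousAt
  set T : ↥S → ↥S := fun f =>
    ⟨BoundedContinuousFunction.mkOfBound ⟨Tfun f, hTcont f⟩ (M - δ)
      (fun x y => Real.dist_le_of_mem_Icc ⟨hTlow f x, hTup f x⟩ ⟨hTlow f y, hTup f y⟩),
     fun x => ⟨hTlow f x, hTup f x⟩⟩ with hTdef
  -- Lipschitz estimate for G
  set L : ℝ := μ - δ / M ^ 2 with hLdef
  have hL0 : 0 ≤ L := by
    have h1 : δ / M ^ 2 ≤ 1 / δ := by
      rw [div_le_div_iff₀ (by positivity) hδ]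
      nlinarith
    rw [hLdef]
    linarith [le_trans h1 hμδ]
  have hLμ : L < μ := by
    rw [hLdef]
    have : 0 < δ / M ^ 2 := by positivity
    linarith
  have hGlip : ∀ (f₁ f₂ : ↥S) (s : ℝ), |G f₁ s - G f₂ s| ≤ L * dist f₁ f₂ := by
    intro f₁ f₂ s
    have ha1 := (f₁.2 s).1
    have ha2 := (f₁.2 s).2
    have hb1 := (f₂.2 s).1
    have hb2 := (f₂.2 s).2
    have hap : 0 < f₁.1 s := hfpos f₁ s
    have hbp : 0 < f₂.1 s := hfpos f₂ s
    have habp : 0 < f₁.1 s * f₂.1 s := mul_pos hap hbp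
    have hab1 : δ ^ 2 ≤ f₁.1 s * f₂.1 s := by nlinarith
    have hab2 : f₁.1 s * f₂.1 s ≤ M ^ 2 := by nlinarith
    have key : G f₁ s - G f₂ s
        = (f₁.1 s - f₂.1 s) * (μ + A s / (f₁.1 s * f₂.1 s)) := by
      rw [hGdef]
      simp only
      field_simp
      ring
    have hfac : |μ + A s / (f₁.1 s * f₂.1 s)| ≤ L := by
      have hlow : -μ ≤ A s / (f₁.1 s * f₂.1 s) := by
        have h1 : -M / (f₁.1 s * f₂.1 s) ≤ A s / (f₁.1 s * f₂.1 s) :=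
          (div_le_div_iff_of_pos_right habp).2 (hAlow s)
        have h2 : M / (f₁.1 s * f₂.1 s) ≤ M / δ ^ 2 :=
          div_le_div_of_nonneg_left hM0.le (by positivity) hab1
        have h3 : -M / (f₁.1 s * f₂.1 s) = -(M / (f₁.1 s * f₂.1 s)) := by ring
        have hμM2 : μ = M / δ ^ 2 := hμdef
        rw [hμM2]
        linarith [h3 ▸ h1]
      have hhigh : A s / (f₁.1 s * f₂.1 s) ≤ -(δ / M ^ 2) := by
        have h1 : A s / (f₁.1 s * f₂.1 s) ≤ -δ / (f₁.1 s * f₂.1 s) :=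
          (div_le_div_iff_of_pos_right habp).2 (hAneg s)
        have h2 : δ / M ^ 2 ≤ δ / (f₁.1 s * f₂.1 s) :=
          div_le_div_of_nonneg_left hδ.le habp hab2
        have h3 : -δ / (f₁.1 s * f₂.1 s) = -(δ / (f₁.1 s * f₂.1 s)) := by ring
        linarith [h3 ▸ h1]
      rw [hLdef]
      exact abs_le.2 ⟨by linarith, by linarith⟩
    have hdist : |f₁.1 s - f₂.1 s| ≤ dist f₁ f₂ := by
      rw [← Real.dist_eq, Subtype.dist_eq]
      exact BoundedContinuousFunction.dist_coe_le_dist s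
    calc |G f₁ s - G f₂ s| = |f₁.1 s - f₂.1 s| * |μ + A s / (f₁.1 s * f₂.1 s)| := by
          rw [key, abs_mul]
      _ ≤ dist f₁ f₂ * L := mul_le_mul hdist hfac (abs_nonneg _) dist_nonneg
      _ = L * dist f₁ f₂ := mul_comm _ _
  -- T is a contraction
  have hTlip : ∀ f₁ f₂ : ↥S, dist (T f₁) (T f₂) ≤ L / μ * dist f₁ f₂ := by
    intro f₁ f₂
    rw [Subtype.dist_eq]
    refine (BoundedContinuousFunction.dist_le
      (mul_nonneg (div_nonneg hL0 hμ.le) dist_nonneg)).2 fun x => ?_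
    have hc := Stmt18Aux.J_contract hμ (hGcont f₁) (hGcont f₂) (hGabs f₁) (hGabs f₂)
      (hGlip f₁ f₂) x
    have heq : (T f₁).1 x = Tfun f₁ x := rfl
    have heq2 : (T f₂).1 x = Tfun f₂ x := rfl
    rw [heq, heq2, Real.dist_eq]
    calc |Tfun f₁ x - Tfun f₂ x| ≤ L * dist f₁ f₂ / μ := hc
      _ = L / μ * dist f₁ f₂ := by ring
  set K : NNReal := ⟨L / μ, div_nonneg hL0 hμ.le⟩ with hKdef
  have hCW : ContractingWith K T := by
    constructor
    · rw [← NNReal.coe_lt_coe]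
      show L / μ < 1
      rw [div_lt_one hμ]
      exact hLμ
    · exact LipschitzWith.of_dist_le_mul fun f₁ f₂ => hTlip f₁ f₂
  set ρfix : ↥S := hCW.fixedPoint T with hρdef
  have hfix : T ρfix = ρfix := hCW.fixedPoint_isFixedPt
  have hpt : ∀ x, Tfun ρfix x = ρfix.1 x := by
    intro x
    have := congrArg (fun f : ↥S => f.1 x) hfix
    exact this
  refine ⟨fun x => ρfix.1 x, δ, M, hδ, hMδ, fun x => ⟨(ρfix.2 x).1, (ρfix.2 x).2⟩, ?_⟩
  intro x
  have heq : (fun y => ρfix.1 y) = Tfun ρfix := funext fun y => (hpt y).symm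
  rw [heq]
  have hd := hTderiv ρfix x
  convert hd using 1
  rw [hpt x, hGdef]
  simp only
  have hρx : 0 < ρfix.1 x := hfpos ρfix x
  field_simp
  ring
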